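/- Uniform bound on the coordinates of the self-normalized error (Supplementary Lemma): In the error setup, let v = ε/‖ε‖₂ with coordinates v_1,…,v_n, and let c > 0 be a constant such that P(√n·|v_i| ≥ t) ≤ 4·exp(−c·λ_min(V)·t²) for every i and every t > 0 (such c, depending only on K_w, V_lo, V_up, exists). Then P(there exists i ∈ {1,…,n} with |v_i| > √(3/(2c·λ_min(V)))·√(log n / n)) ≤ 4/√n. -/

import Mathlib

open MeasureTheory ProbabilityTheory Matrix Filter

/-- Sub-Gaussian norm `‖A‖_{ψ₂} = inf {t > 0 : E[exp(A²/t²)] ≤ 2}`. -/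
noncomputable def subGaussianNorm {Ω : Type*} [MeasurableSpace Ω] (μ : Measure Ω)
    (A : Ω → ℝ) : ℝ :=
  sInf {t : ℝ | 0 < t ∧ ∫ ω, Real.exp (A ω ^ 2 / t ^ 2) ∂μ ≤ 2}

/-- Smallest eigenvalue of a (symmetric) matrix, via the Rayleigh quotient. -/
noncomputable def lamMin {n : ℕ} (M : Matrix (Fin n) (Fin n) ℝ) : ℝ :=
  ⨅ x : {x : Fin n → ℝ // ∑ i, (x i) ^ 2 = 1}, x.1 ⬝ᵥ M.mulVec x.1

/-- The square root of a positive semidefinite matrix, as `Matrix.PosSemidef.sqrt` was defined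
in the older Mathlib (removed since). -/
noncomputable def Matrix.PosSemidef.sqrt {n : Type*} [Fintype n] [DecidableEq n]
    {A : Matrix n n ℝ} (hA : A.PosSemidef) : Matrix n n ℝ :=
  hA.1.eigenvectorUnitary.1 * diagonal ((↑) ∘ (Real.sqrt ·) ∘ hA.1.eigenvalues) *
    (star hA.1.eigenvectorUnitary : Matrix n n ℝ)

lemma lamMin_pos {n : ℕ} (hn : 1 ≤ n) {V : Matrix (Fin n) (Fin n) ℝ} (hV : V.PosDef) :
    0 < lamMin V := by
  set S : Set (Fin n → ℝ) := {x | ∑ i, (x i) ^ 2 = 1} with hS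
  have hx1 : (fun i : Fin n => if i = ⟨0, hn⟩ then (1:ℝ) else 0) ∈ S := by
    simp [hS, apply_ite (· ^ 2)]
  have hScl : IsClosed S := isClosed_eq (by continuity) continuous_const
  have hSsub : S ⊆ Metric.closedBall 0 1 := by
    intro x hx
    simp only [Metric.mem_closedBall, dist_zero_right]
    rw [pi_norm_le_iff_of_nonneg (by norm_num)]
    intro i
    rw [Real.norm_eq_abs, abs_le_one_iff_mul_self_le_one, ← sq]
    calc (x i)^2 ≤ ∑ j, (x j)^2 := Finset.single_le_sum (f := fun j => (x j)^2) (fun j _ => sq_nonneg _) (Finset.mem_univ i)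
    _ = 1 := hx
  have hcomp : IsCompact S :=
    (isCompact_closedBall 0 1).of_isClosed_subset hScl hSsub
  have hf : Continuous fun x : Fin n → ℝ => x ⬝ᵥ V.mulVec x := by
    simp only [dotProduct, Matrix.mulVec, dotProduct]
    fun_prop
  obtain ⟨x₀, hx₀S, hmin⟩ := hcomp.exists_isMinOn ⟨_, hx1⟩ hf.continuousOn
  have hx₀ne : x₀ ≠ 0 := by
    intro h
    have := hx₀S
    simp [hS, h] at this
  have hpos : 0 < x₀ ⬝ᵥ V.mulVec x₀ := by
    have := hV.dotProduct_mulVec_pos hx₀ne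
    simpa using this
  refine lt_of_lt_of_le hpos ?_
  have : Nonempty {x : Fin n → ℝ // ∑ i, (x i) ^ 2 = 1} := ⟨⟨_, hx1⟩⟩
  exact le_ciInf fun x => hmin x.2

/-- **Supplementary Lemma (uniform bound on the coordinates of the self-normalized
error vector `v = ε/‖ε‖₂`).** -/
theorem selfnormalized_error_uniform_bound
    (Kw Vlo Vup : ℝ) (hKw : 0 < Kw) (hVlo : 0 < Vlo) (hVloup : Vlo ≤ Vup)
    (n : ℕ) (hn : 1 ≤ n)
    (Ω : Type) (mΩ : MeasurableSpace Ω) (μ : Measure Ω) (hμ : IsProbabilityMeasure μ)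
    (σ : ℝ) (hσ : 0 < σ)
    (V : Matrix (Fin n) (Fin n) ℝ) (hV : V.PosDef) (htr : V.trace = (n : ℝ))
    (w : Ω → Fin n → ℝ) (hwm : Measurable w)
    (hwindep : iIndepFun (fun i ω => w ω i) μ)
    (hwmean : ∀ i, ∫ ω, w ω i ∂μ = 0)
    (hwvar : ∀ i, ∫ ω, (w ω i) ^ 2 ∂μ = 1)
    (hwsubG : ∀ i, subGaussianNorm μ (fun ω => w ω i) ≤ Kw)
    (ε : Ω → Fin n → ℝ) (hε : ∀ ω, ε ω = σ • (hV.posSemidef.sqrt.mulVec (w ω)))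
    (hdiag : ∀ i, Vlo ≤ σ ^ 2 * V i i ∧ σ ^ 2 * V i i ≤ Vup)
    (hne : μ {ω | ε ω = 0} = 0)
    (v : Ω → Fin n → ℝ)
    (hv : ∀ ω i, v ω i = ε ω i / Real.sqrt (∑ i', (ε ω i') ^ 2))
    -- a constant `c > 0` satisfying the tail bound of Lemma A.1
    (c : ℝ) (hc : 0 < c)
    (htail : ∀ (i : Fin n) (t : ℝ), 0 < t →
      (μ {ω | t ≤ Real.sqrt n * |v ω i|}).toReal ≤ 4 * Real.exp (-c * lamMin V * t ^ 2)) :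
    (μ {ω | ∃ i : Fin n,
        Real.sqrt (3 / (2 * c * lamMin V)) * Real.sqrt (Real.log n / n) < |v ω i|}).toReal ≤
      4 / Real.sqrt n := by
  have hlam : 0 < lamMin V := lamMin_pos hn hV
  have hprob : ∀ s : Set Ω, (μ s).toReal ≤ 1 := by
    intro s
    calc (μ s).toReal ≤ (μ Set.univ).toReal :=
          ENNReal.toReal_mono (measure_ne_top μ _) (measure_mono (Set.subset_univ _))
      _ = 1 := by simp
  rcases eq_or_lt_of_le hn with h1 | h2
  · -- n = 1
    have : Real.sqrt n = 1 := by rw [← h1]; simp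
    rw [this]
    calc (μ _).toReal ≤ 1 := hprob _
      _ ≤ 4 / 1 := by norm_num
  · -- n ≥ 2
    have hn0 : (0:ℝ) < n := by positivity
    have hlog : 0 < Real.log n := Real.log_pos (by exact_mod_cast h2)
    set A : ℝ := 3 / (2 * c * lamMin V) with hA
    have hApos : 0 < A := by positivity
    set t : ℝ := Real.sqrt A * Real.sqrt (Real.log n) with ht
    have htpos : 0 < t := mul_pos (Real.sqrt_pos.2 hApos) (Real.sqrt_pos.2 hlog)
    have key : Real.sqrt n * (Real.sqrt A * Real.sqrt (Real.log n / n)) = t := by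
      rw [Real.sqrt_div hlog.le, ht]
      field_simp
    have hsub : {ω | ∃ i : Fin n, Real.sqrt A * Real.sqrt (Real.log n / n) < |v ω i|} ⊆
        ⋃ i : Fin n, {ω | t ≤ Real.sqrt n * |v ω i|} := by
      rintro ω ⟨i, hi⟩
      refine Set.mem_iUnion.2 ⟨i, ?_⟩
      show t ≤ Real.sqrt n * |v ω i|
      rw [← key]
      exact mul_le_mul_of_nonneg_left hi.le (Real.sqrt_nonneg _)
    have hexp : Real.exp (-c * lamMin V * t ^ 2) = (n:ℝ) ^ (-(3/2) : ℝ) := by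
      have ht2 : t ^ 2 = A * Real.log n := by
        rw [ht, mul_pow, Real.sq_sqrt hApos.le, Real.sq_sqrt hlog.le]
      have : -c * lamMin V * t ^ 2 = -(3/2) * Real.log n := by
        rw [ht2, hA]
        field_simp
      rw [this, Real.rpow_def_of_pos hn0]
      ring_nf
    calc (μ _).toReal
        ≤ (μ (⋃ i : Fin n, {ω | t ≤ Real.sqrt n * |v ω i|})).toReal :=
          ENNReal.toReal_mono (measure_ne_top μ _) (measure_mono hsub)
      _ ≤ (∑ i : Fin n, μ {ω | t ≤ Real.sqrt n * |v ω i|}).toReal :=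
          ENNReal.toReal_mono (by exact ENNReal.sum_ne_top.2 fun i _ => measure_ne_top μ _)
            (measure_iUnion_fintype_le _ _)
      _ = ∑ i : Fin n, (μ {ω | t ≤ Real.sqrt n * |v ω i|}).toReal :=
          ENNReal.toReal_sum fun i _ => measure_ne_top μ _
      _ ≤ ∑ _i : Fin n, 4 * Real.exp (-c * lamMin V * t ^ 2) :=
          Finset.sum_le_sum fun i _ => htail i t htpos
      _ = n * (4 * (n:ℝ) ^ (-(3/2) : ℝ)) := by
          rw [Finset.sum_const, Finset.card_univ, Fintype.card_fin, nsmul_eq_mul, hexp]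
      _ = 4 / Real.sqrt n := by
          rw [Real.sqrt_eq_rpow]
          rw [show (n:ℝ) * (4 * (n:ℝ) ^ (-(3/2):ℝ)) = 4 * ((n:ℝ) ^ (1:ℝ) * (n:ℝ) ^ (-(3/2):ℝ)) by
            rw [Real.rpow_one]; ring]
          rw [← Real.rpow_add hn0]
          norm_num
          rw [Real.rpow_neg hn0.le]; exact (div_eq_mul_inv _ _).symm
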